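/- Let f : [0,∞) → (0,∞) be càdlàg without negative jumps, and define T₀(f) = inf{t ≥ 0 : f(t) = 0} (possibly ∞), i(t) = ∫₀^{t∧T₀} ds / f(s), and let c be the right-continuous inverse of i, c(y) = inf{t : i(t) > y}. Then h = f ∘ c satisfies h(t) = f(∫₀ᵗ h(s) ds) for all t < i(T₀), and c(t) = ∫₀ᵗ h(s) ds on that interval. (Lamperti transformation as a solution to the time-change equation.) -/

import Mathlib

open Set MeasureTheory Filter

/-- Lamperti transformation: let `f` be càdlàg without negative
jumps and strictly positive on `[0,∞)` (so its hitting time of `0` is infinite),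
`i(t) = ∫₀ᵗ ds/f(s)`, `c` the right-continuous inverse of `i`, and `h = f ∘ c`.
Then for every `t ≥ 0` in the range of `i` (i.e. `t < i(T₀) = sup i`),
`h(t) = f(∫₀ᵗ h(s) ds)` and `c(t) = ∫₀ᵗ h(s) ds`. -/
theorem lamperti_transform_solves
    (f fm : ℝ → ℝ)
    (hf_rc : ∀ t ≥ (0:ℝ), ContinuousWithinAt f (Ici t) t)
    (hf_ll : ∀ t > (0:ℝ), Tendsto f (nhdsWithin t (Iio t)) (nhds (fm t)))
    (hf_nnj : ∀ t > (0:ℝ), fm t ≤ f t)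
    (hf_pos : ∀ t ≥ (0:ℝ), 0 < f t)
    (i c h : ℝ → ℝ)
    (hi : ∀ t, i t = ∫ s in (0:ℝ)..t, (f s)⁻¹)
    (hi_int : ∀ t ≥ (0:ℝ), IntervalIntegrable (fun s => (f s)⁻¹) volume 0 t)
    (hc : ∀ y, c y = sInf {t : ℝ | 0 ≤ t ∧ y < i t})
    (hh : h = f ∘ c)
    (hh_int : ∀ t ≥ (0:ℝ), IntervalIntegrable h volume 0 t) :
    ∀ t ≥ (0:ℝ), (∃ u ≥ (0:ℝ), t < i u) →
      h t = f (∫ s in (0:ℝ)..t, h s) ∧ c t = ∫ s in (0:ℝ)..t, h s := by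
  subst hh
  have hi0 : i 0 = 0 := by rw [hi]; simp
  -- i is strictly increasing on [0,∞)
  have hstrict : ∀ a b : ℝ, 0 ≤ a → a < b → i a < i b := by
    intro a b ha hab
    have hb : (0:ℝ) ≤ b := ha.trans hab.le
    have hint : IntervalIntegrable (fun s => (f s)⁻¹) volume a b :=
      (hi_int b hb).mono_set (by
        rw [uIcc_of_le hab.le, uIcc_of_le hb]
        exact Icc_subset_Icc ha le_rfl)
    have hpos : 0 < ∫ s in a..b, (f s)⁻¹ :=
      intervalIntegral.intervalIntegral_pos_of_pos_on hint
        (fun x hx => inv_pos.mpr (hf_pos x (ha.trans hx.1.le))) hab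
    have hadd := intervalIntegral.integral_add_adjacent_intervals (hi_int a ha) hint
    rw [hi a, hi b, ← hadd]; linarith
  have hmono : ∀ a b : ℝ, 0 ≤ a → a ≤ b → i a ≤ i b := by
    intro a b ha hab
    rcases eq_or_lt_of_le hab with rfl | hlt
    · exact le_rfl
    · exact (hstrict a b ha hlt).le
  -- c is nonneg, and c of negative is 0
  have hcnn : ∀ y, 0 ≤ c y := by
    intro y
    rw [hc]
    rcases eq_empty_or_nonempty {t : ℝ | 0 ≤ t ∧ y < i t} with he | hne
    · rw [he]; simp [Real.sInf_empty]
    · exact le_csInf hne (fun t ht => ht.1)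
  -- continuity of i on [0, u]
  have hicont : ∀ u : ℝ, 0 ≤ u → ContinuousOn i (Icc 0 u) := by
    intro u hu
    have hieq : i = fun t => ∫ s in (0:ℝ)..t, (f s)⁻¹ := funext hi
    rw [hieq, ← uIcc_of_le hu]
    apply intervalIntegral.continuousOn_primitive_interval
    rw [uIcc_of_le hu, integrableOn_Icc_iff_integrableOn_Ioc]
    exact (hi_int u hu).1
  -- inverse property
  have hC : ∀ y ≥ (0:ℝ), ∀ u ≥ (0:ℝ), y < i u → i (c y) = y ∧ c y ≤ u := by
    intro y hy u hu hyu
    obtain ⟨s, hs, his⟩ := intermediate_value_Icc hu (hicont u hu)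
      (show y ∈ Icc (i 0) (i u) from ⟨by rw [hi0]; exact hy, hyu.le⟩)
    have hset : {t : ℝ | 0 ≤ t ∧ y < i t} = Ioi s := by
      ext t
      simp only [mem_setOf_eq, mem_Ioi]
      constructor
      · rintro ⟨ht0, hyt⟩
        by_contra hts
        push_neg at hts
        exact absurd (hmono t s ht0 hts) (by rw [his]; exact not_le.mpr hyt)
      · intro hst
        exact ⟨hs.1.trans hst.le, his ▸ hstrict s t hs.1 hst⟩
    have hcy : c y = s := by rw [hc, hset, csInf_Ioi]
    rw [hcy, his]
    exact ⟨rfl, hs.2⟩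
  have hcneg : ∀ y : ℝ, y < 0 → c y = 0 := by
    intro y hy
    rw [hc]
    refine le_antisymm (csInf_le ⟨0, fun t ht => ht.1⟩ ⟨le_rfl, by rw [hi0]; exact hy⟩) ?_
    exact le_csInf ⟨0, le_rfl, by rw [hi0]; exact hy⟩ (fun t ht => ht.1)
  -- continuity of c at points below i u
  have hccont : ∀ u ≥ (0:ℝ), ∀ x : ℝ, 0 ≤ x → x < i u → ContinuousAt c x := by
    intro u hu x hx hxu
    have hicx := hC x hx u hu hxu
    set a := c x with ha
    have ha0 : 0 ≤ a := hcnn x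
    rw [ContinuousAt, tendsto_order]
    constructor
    · -- lower bounds
      intro b hb
      rcases lt_or_ge b 0 with hb0 | hb0
      · exact Eventually.of_forall (fun y => hb0.trans_le (hcnn y))
      · have h1 : i b < x := by
          rw [← hicx.1]; exact hstrict b a hb0 hb
        have h2 : Ioo (i b) (i u) ∈ nhds x := Ioo_mem_nhds h1 hxu
        filter_upwards [h2] with y hy
        have hy0 : 0 ≤ y := by
          have h0b := hmono 0 b le_rfl hb0
          rw [hi0] at h0b
          exact h0b.trans hy.1.le
        have := hC y hy0 u hu hy.2
        by_contra hcy
        push_neg at hcy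
        exact absurd (this.1 ▸ hmono (c y) b (hcnn y) hcy) (not_le.mpr hy.1)
    · -- upper bounds
      intro b hb
      have hb0 : 0 ≤ b := ha0.trans hb.le
      have h1 : x < i b := by rw [← hicx.1]; exact hstrict a b ha0 hb
      filter_upwards [Iio_mem_nhds h1] with y hy
      rcases lt_or_ge y 0 with hy0 | hy0
      · rw [hcneg y hy0]; exact ha0.trans_lt hb
      · have := hC y hy0 b hb0 hy
        rcases eq_or_lt_of_le this.2 with heq | hlt
        · exact absurd (heq ▸ this.1) (ne_of_lt hy).symm
        · exact hlt
  -- right derivative of i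
  have hdi : ∀ a : ℝ, 0 ≤ a → HasDerivWithinAt i (f a)⁻¹ (Ici a) a := by
    intro a ha
    have hieq : i = fun t => ∫ s in (0:ℝ)..t, (f s)⁻¹ := funext hi
    rw [hieq]
    have hcw : ContinuousWithinAt (fun s => (f s)⁻¹) (Ici a) a :=
      (hf_rc a ha).inv₀ (hf_pos a ha).ne'
    exact intervalIntegral.integral_hasDerivWithinAt_right (hi_int a ha)
      ⟨Icc a (a+1), nhdsWithin_mono a Ioi_subset_Ici_self (Icc_mem_nhdsGE (by linarith)),
        ((integrableOn_Icc_iff_integrableOn_Ioc).mpr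
          ((hi_int (a+1) (by linarith)).1.mono_set (Ioc_subset_Ioc ha le_rfl))).aestronglyMeasurable⟩
      (hcw.mono Ioi_subset_Ici_self)
  -- main proof
  intro t ht hex
  obtain ⟨u, hu, htu⟩ := hex
  have h0u : (0:ℝ) < i u := lt_of_le_of_lt ht htu
  have hc0 : c 0 = 0 := by
    have hkey := (hC 0 le_rfl u hu h0u).1
    by_contra hne
    have hpos : 0 < c 0 := lt_of_le_of_ne (hcnn 0) (Ne.symm hne)
    have := hstrict 0 (c 0) le_rfl hpos
    rw [hi0, hkey] at this
    exact lt_irrefl 0 this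
  -- continuity of f ∘ c within Ici x at x
  have hhcont : ∀ x : ℝ, 0 ≤ x → x < i u → ContinuousWithinAt (f ∘ c) (Ici x) x := by
    intro x hx hxu
    have hix : i (c x) = x := (hC x hx u hu hxu).1
    have hmem : ∀ᶠ y in nhdsWithin x (Ici x), c y ∈ Ici (c x) := by
      filter_upwards [self_mem_nhdsWithin,
        mem_nhdsWithin_of_mem_nhds (Iio_mem_nhds hxu)] with y hy1 hy2
      have hy0 : 0 ≤ y := hx.trans hy1
      have hiy : i (c y) = y := (hC y hy0 u hu hy2).1
      by_contra hcc
      simp only [mem_Ici, not_le] at hcc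
      have := hmono (c y) (c x) (hcnn y) hcc.le
      rw [hiy, hix] at this
      exact absurd hy1 (not_le.mpr (lt_of_le_of_ne this (by
        intro he
        rw [← hiy, ← hix] at he
        exact absurd (he ▸ hstrict (c y) (c x) (hcnn y) hcc) (lt_irrefl _)) ))
    have htc : Tendsto c (nhdsWithin x (Ici x)) (nhdsWithin (c x) (Ici (c x))) :=
      tendsto_nhdsWithin_iff.mpr ⟨(hccont u hu x hx hxu).continuousWithinAt, hmem⟩
    exact Filter.Tendsto.comp (hf_rc (c x) (hcnn x)) htc
  -- the two functions agree on [0, t]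
  have derivc : ∀ x ∈ Ico (0:ℝ) t, HasDerivWithinAt c (f (c x)) (Ici x) x := by
    intro x hx
    have hxu : x < i u := hx.2.trans htu
    have hix : i (c x) = x := (hC x hx.1 u hu hxu).1
    have ha0 : 0 ≤ c x := hcnn x
    have hslopei : Tendsto (slope i (c x)) (nhdsWithin (c x) (Ici (c x) \ {c x}))
        (nhds (f (c x))⁻¹) := hasDerivWithinAt_iff_tendsto_slope.mp (hdi (c x) ha0)
    have hev : ∀ᶠ y in nhdsWithin x (Ici x \ {x}), x < y ∧ i (c y) = y ∧ c x < c y := by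
      filter_upwards [self_mem_nhdsWithin,
        mem_nhdsWithin_of_mem_nhds (Iio_mem_nhds hxu)] with y hy1 hy2
      obtain ⟨hy1a, hy1b⟩ := hy1
      have hxy : x < y := lt_of_le_of_ne hy1a (Ne.symm (by simpa using hy1b))
      have hy0 : 0 ≤ y := hx.1.trans hy1a
      have hiy : i (c y) = y := (hC y hy0 u hu hy2).1
      refine ⟨hxy, hiy, ?_⟩
      by_contra hcc
      push_neg at hcc
      have := hmono (c y) (c x) (hcnn y) hcc
      rw [hiy, hix] at this
      exact absurd this (not_le.mpr hxy)
    have htc : Tendsto c (nhdsWithin x (Ici x \ {x}))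
        (nhdsWithin (c x) (Ici (c x) \ {c x})) := by
      rw [tendsto_nhdsWithin_iff]
      refine ⟨((hccont u hu x hx.1 hxu).continuousWithinAt).mono diff_subset, ?_⟩
      filter_upwards [hev] with y hy
      simp only [mem_diff, mem_Ici, mem_singleton_iff]
      exact ⟨hy.2.2.le, hy.2.2.ne'⟩
    have hfa : f (c x) ≠ 0 := (hf_pos (c x) ha0).ne'
    have h1 : Tendsto (fun y => (slope i (c x) (c y))⁻¹) (nhdsWithin x (Ici x \ {x}))
        (nhds ((f (c x))⁻¹)⁻¹) := (hslopei.comp htc).inv₀ (inv_ne_zero hfa)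
    rw [inv_inv] at h1
    rw [hasDerivWithinAt_iff_tendsto_slope]
    refine h1.congr' ?_
    filter_upwards [hev] with y hy
    obtain ⟨hxy, hiy, hlt⟩ := hy
    rw [slope_def_field, slope_def_field, hiy, hix, inv_div]
  have derivG : ∀ x ∈ Ico (0:ℝ) t,
      HasDerivWithinAt (fun v => ∫ s in (0:ℝ)..v, (f ∘ c) s) (f (c x)) (Ici x) x := by
    intro x hx
    have hxu : x < i u := hx.2.trans htu
    exact intervalIntegral.integral_hasDerivWithinAt_right (hh_int x hx.1)
      ⟨Icc x (x+1), nhdsWithin_mono x Ioi_subset_Ici_self (Icc_mem_nhdsGE (by linarith)),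
        ((integrableOn_Icc_iff_integrableOn_Ioc).mpr
          ((hh_int (x+1) (by linarith [hx.1])).1.mono_set
            (Ioc_subset_Ioc hx.1 le_rfl))).aestronglyMeasurable⟩
      ((hhcont x hx.1 hxu).mono Ioi_subset_Ici_self)
  have contc : ContinuousOn c (Icc 0 t) := fun x hx =>
    (hccont u hu x hx.1 (lt_of_le_of_lt hx.2 htu)).continuousWithinAt
  have contG : ContinuousOn (fun v => ∫ s in (0:ℝ)..v, (f ∘ c) s) (Icc 0 t) := by
    rw [← uIcc_of_le ht]
    apply intervalIntegral.continuousOn_primitive_interval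
    rw [uIcc_of_le ht, integrableOn_Icc_iff_integrableOn_Ioc]
    exact (hh_int t ht).1
  have key := eq_of_has_deriv_right_eq derivc derivG contc contG
    (by rw [hc0]; simp) t (right_mem_Icc.mpr ht)
  refine ⟨?_, key⟩
  rw [← key]
  rfl
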